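/- Let (A, Con, Δ, ⊢) be a normal default structure, and x, y, z information states. If x ε y and x ε z, then either y = z or y ∪ z is not consistent. In other words, distinct extensions of the same state are mutually inconsistent. -/

import Mathlib

/-- A set is consistent if every finite subset of it lies in Con. -/
def IsCons {α : Type*} (Con : Set α → Prop) (S : Set α) : Prop :=
  ∀ X : Set α, X ⊆ S → X.Finite → Con X

/-- F(X) := {a ∈ A | ∃ finite Y ⊆ X with Y ∈ Con and Y ⊢ a}. -/
def Fop {α : Type*} (Con : Set α → Prop) (ent : Set α → α → Prop) (S : Set α) : Set α :=
  {a | ∃ Y : Set α, Y ⊆ S ∧ Y.Finite ∧ Con Y ∧ ent Y a}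

/-- φ(x, S, 0) = x and
φ(x, S, i+1) = F(φ(x, S, i)) ∪ {a | (X, a) ∈ Δ, X ⊆ φ(x, S, i), {a} ∪ S consistent}. -/
def phi {α : Type*} (Con : Set α → Prop) (ent : Set α → α → Prop)
    (Δ : Set (Set α × α)) (x S : Set α) : ℕ → Set α
  | 0 => x
  | i + 1 =>
      Fop Con ent (phi Con ent Δ x S i) ∪
        {a | ∃ X : Set α, (X, a) ∈ Δ ∧ X ⊆ phi Con ent Δ x S i ∧ IsCons Con ({a} ∪ S)}

/-- Φ(x, S) = ⋃_{i≥0} φ(x, S, i). -/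
def Phi {α : Type*} (Con : Set α → Prop) (ent : Set α → α → Prop)
    (Δ : Set (Set α × α)) (x S : Set α) : Set α :=
  ⋃ i, phi Con ent Δ x S i

/-- An information state is a set of the form F(X) with X consistent. -/
def IsState {α : Type*} (Con : Set α → Prop) (ent : Set α → α → Prop) (x : Set α) : Prop :=
  ∃ X : Set α, IsCons Con X ∧ x = Fop Con ent X

/-- An information state y is an extension of x (written x ε y) if Φ(x, y) = y. -/
def IsExt {α : Type*} (Con : Set α → Prop) (ent : Set α → α → Prop)
    (Δ : Set (Set α × α)) (x y : Set α) : Prop :=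
  IsState Con ent y ∧ Phi Con ent Δ x y = y

section Aux
variable {α : Type*} (Con : Set α → Prop) (ent : Set α → α → Prop) (Δ : Set (Set α × α))

lemma phi_step_mono {S s t : Set α} (hst : s ⊆ t) :
    (Fop Con ent s ∪ {a | ∃ X : Set α, (X, a) ∈ Δ ∧ X ⊆ s ∧ IsCons Con ({a} ∪ S)}) ⊆
    (Fop Con ent t ∪ {a | ∃ X : Set α, (X, a) ∈ Δ ∧ X ⊆ t ∧ IsCons Con ({a} ∪ S)}) := by
  rintro a (⟨Y, hYs, hfin, hcon, hent⟩ | ⟨X, hXΔ, hXs, hc⟩)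
  · exact Or.inl ⟨Y, hYs.trans hst, hfin, hcon, hent⟩
  · exact Or.inr ⟨X, hXΔ, hXs.trans hst, hc⟩

lemma phi_mono (hCsing : ∀ a : α, Con {a})
    (hRefl : ∀ (X : Set α) (a : α), a ∈ X → Con X → ent X a)
    (x S : Set α) : Monotone (phi Con ent Δ x S) := by
  apply monotone_nat_of_le_succ
  intro i
  induction i with
  | zero =>
      intro a ha
      exact Or.inl ⟨{a}, by simpa using ha, Set.finite_singleton a, hCsing a,
        hRefl _ a rfl (hCsing a)⟩
  | succ i ih => exact phi_step_mono Con ent Δ ih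

lemma finite_subset_phi (hCsing : ∀ a : α, Con {a})
    (hRefl : ∀ (X : Set α) (a : α), a ∈ X → Con X → ent X a)
    (x S : Set α) {X : Set α} (hfin : X.Finite) (hsub : X ⊆ Phi Con ent Δ x S) :
    ∃ j, X ⊆ phi Con ent Δ x S j := by
  revert hsub
  refine Set.Finite.induction_on (motive := fun s _ => s ⊆ Phi Con ent Δ x S → ∃ j, s ⊆ phi Con ent Δ x S j) X hfin (fun _ => ⟨0, by simp⟩) ?_
  rintro a s - - ih hsub
  obtain ⟨j, hj⟩ := ih (fun b hb => hsub (Set.mem_insert_of_mem a hb))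
  obtain ⟨_, ⟨i, rfl⟩, hai⟩ := hsub (Set.mem_insert a s)
  refine ⟨max i j, Set.insert_subset ?_ ?_⟩
  · exact phi_mono Con ent Δ hCsing hRefl x S (le_max_left i j) hai
  · exact hj.trans (phi_mono Con ent Δ hCsing hRefl x S (le_max_right i j))

lemma ext_subset (hCfin : ∀ X : Set α, Con X → X.Finite)
    (hCsing : ∀ a : α, Con {a})
    (hRefl : ∀ (X : Set α) (a : α), a ∈ X → Con X → ent X a)
    (hDelta : ∀ p ∈ Δ, Con p.1)
    {x y z : Set α}
    (hy : Phi Con ent Δ x y = y) (hz : Phi Con ent Δ x z = z)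
    (hcons : IsCons Con (y ∪ z)) : y ⊆ z := by
  have key : ∀ i, phi Con ent Δ x y i ⊆ z := by
    intro i
    induction i with
    | zero =>
        intro a ha
        rw [← hz]
        exact Set.mem_iUnion.2 ⟨0, ha⟩
    | succ i ih =>
        rintro a ha
        have hay : a ∈ y := by
          rw [← hy]; exact Set.mem_iUnion.2 ⟨i + 1, ha⟩
        rcases ha with ⟨Y, hYs, hfin, hcon, hent⟩ | ⟨X, hXΔ, hXs, _⟩
        · obtain ⟨j, hj⟩ := finite_subset_phi Con ent Δ hCsing hRefl x z hfin
            (by rw [hz]; exact hYs.trans ih)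
          rw [← hz]
          exact Set.mem_iUnion.2 ⟨j + 1, Or.inl ⟨Y, hj, hfin, hcon, hent⟩⟩
        · have hXfin : X.Finite := hCfin X (hDelta _ hXΔ)
          obtain ⟨j, hj⟩ := finite_subset_phi Con ent Δ hCsing hRefl x z hXfin
            (by rw [hz]; exact hXs.trans ih)
          have hc : IsCons Con ({a} ∪ z) := by
            intro W hW hWfin
            exact hcons W (hW.trans (Set.union_subset_union
              (Set.singleton_subset_iff.2 hay) Set.Subset.rfl)) hWfin
          rw [← hz]
          exact Set.mem_iUnion.2 ⟨j + 1, Or.inr ⟨X, hXΔ, hj, hc⟩⟩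
  rw [← hy]
  exact Set.iUnion_subset key

end Aux

/-- distinct extensions of the same state are mutually inconsistent. -/
theorem extensions_orthogonal {α : Type*} (Con : Set α → Prop) (ent : Set α → α → Prop)
    (Δ : Set (Set α × α))
    (hCfin : ∀ X : Set α, Con X → X.Finite)
    (hCempty : Con ∅)
    (hEntCon : ∀ (X : Set α) (a : α), ent X a → Con X)
    (hCsub : ∀ X Y : Set α, X ⊆ Y → Con Y → Con X)
    (hCsing : ∀ a : α, Con {a})
    (hEntAdd : ∀ (X : Set α) (a : α), ent X a → Con X → Con (X ∪ {a}))
    (hRefl : ∀ (X : Set α) (a : α), a ∈ X → Con X → ent X a)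
    (hTrans : ∀ (X Y : Set α) (c : α), (∀ b ∈ Y, ent X b) → ent Y c → ent X c)
    -- Δ is a set of normal default rules, each a pair (X, a) with X ∈ Con
    (hDelta : ∀ p ∈ Δ, Con p.1) :
    ∀ x y z : Set α, IsState Con ent x → IsState Con ent y → IsState Con ent z →
      IsExt Con ent Δ x y → IsExt Con ent Δ x z →
      y = z ∨ ¬ IsCons Con (y ∪ z) := by
  intro x y z _ _ _ hy hz
  by_cases hc : IsCons Con (y ∪ z)
  · left
    apply Set.Subset.antisymm
    · exact ext_subset Con ent Δ hCfin hCsing hRefl hDelta hy.2 hz.2 hc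
    · exact ext_subset Con ent Δ hCfin hCsing hRefl hDelta hz.2 hy.2
        (by rwa [Set.union_comm])
  · exact Or.inr hc
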